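/- Let K be a field, R = K[x_1, …, x_n], fix positive integer weights w_1, …, w_n, and let ⪯ be a monomial order on ℕ^n (a multiplicative linear well-order) that refines the weight, i.e. w(α) < w(β) implies α ≺ β. For 0 ≠ f ∈ R let lm(f) ∈ ℕ^n denote its ⪯-largest exponent, and for an ideal I ⊆ R let Δ(I) = {α ∈ ℕ^n : α ≠ lm(f) for all nonzero f ∈ I} be its staircase. Suppose I has a finite generating set G such that: (a) G is a Gröbner basis of I with respect to ⪯, i.e. the monomials x^{lm(g)}, g ∈ G, generate the initial ideal of I (the ideal generated by all x^{lm(f)}, 0 ≠ f ∈ I); (b) condition (C1): every g ∈ G has exactly two monomials of highest weight in its support; (c) condition (C2): the map α ↦ w(α) is injective on Δ(I). Let Γ = {w(α) : α ∈ Δ(I)} ⊆ ℕ. Then there exists a surjective function ρ : R/I → Γ ∪ {−∞} such that for all f, g, h ∈ R/I: ρ(f) = −∞ iff f = 0; ρ(af) = ρ(f) for all nonzero a ∈ K; ρ(f + g) ≤ max{ρ(f), ρ(g)}; if ρ(f) < ρ(g) and h ≠ 0 then ρ(fh) < ρ(gh); if f, g are nonzero and ρ(f) = ρ(g), then there is a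 nonzero a ∈ K with ρ(f − ag) < ρ(g); and ρ(fg) = ρ(f) + ρ(g) (with −∞ + m = −∞). That is, R/I is an order domain with weight function ρ. -/

import Mathlib

set_option maxHeartbeats 1000000
set_option synthInstance.maxHeartbeats 1000000


/-- Let `R = K[x_1,…,x_n]` with positive weights `w`, and let `≺` (here `r`)
be a monomial order (multiplicative strict linear well-order) on `ℕ^n` refining the weight.
If an ideal `I` has a finite generating set `G` that is a Gröbner basis w.r.t. `≺`,
and the order-domain conditions (C1) (each `g ∈ G` has exactly two monomials of highest
weight) and (C2) (the weight is injective on the staircase `Δ(I)`) hold, then `R/I` is an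
order domain: there is a surjective weight function `ρ : R/I → Γ ∪ {-∞}` (with
`Γ = w(Δ(I))`) satisfying (O.1)–(O.6). -/
theorem stmt_3 (n : ℕ) (hn : 1 ≤ n) (w : Fin n → ℕ) (hw : ∀ i, 0 < w i)
    (K : Type*) [Field K]
    (wdeg : (Fin n →₀ ℕ) → ℕ) (hwdeg : ∀ α, wdeg α = ∑ i, α i * w i)
    -- the monomial order
    (r : (Fin n →₀ ℕ) → (Fin n →₀ ℕ) → Prop)
    (hr_sto : IsStrictTotalOrder (Fin n →₀ ℕ) r)
    (hr_wf : WellFounded r)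
    (hr_add : ∀ a b c : Fin n →₀ ℕ, r a b → r (a + c) (b + c))
    (hr_w : ∀ a b : Fin n →₀ ℕ, wdeg a < wdeg b → r a b)
    -- leading monomials and the staircase
    (IsLM : MvPolynomial (Fin n) K → (Fin n →₀ ℕ) → Prop)
    (hIsLM : ∀ f α, IsLM f α ↔ (α ∈ f.support ∧ ∀ β ∈ f.support, β ≠ α → r β α))
    (I : Ideal (MvPolynomial (Fin n) K))
    (Δ : Set (Fin n →₀ ℕ))
    (hΔ : Δ = {α | ∀ f ∈ I, f ≠ 0 → ¬ IsLM f α})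
    -- G is a finite generating set of I which is a Gröbner basis for I w.r.t. r
    (G : Finset (MvPolynomial (Fin n) K))
    (hG : I = Ideal.span (G : Set (MvPolynomial (Fin n) K)))
    (hGB : Ideal.span {m : MvPolynomial (Fin n) K |
        ∃ g ∈ G, g ≠ 0 ∧ ∃ α, IsLM g α ∧ m = MvPolynomial.monomial α (1 : K)} =
      Ideal.span {m : MvPolynomial (Fin n) K |
        ∃ f ∈ I, f ≠ 0 ∧ ∃ α, IsLM f α ∧ m = MvPolynomial.monomial α (1 : K)})
    -- (C1)
    (hC1 : ∀ g ∈ G, (g.support.filter (fun α => wdeg α = g.support.sup wdeg)).card = 2)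
    -- (C2)
    (hC2 : Set.InjOn wdeg Δ)
    (Γ : Set ℕ) (hΓ : Γ = wdeg '' Δ) :
    ∃ ρ : (MvPolynomial (Fin n) K ⧸ I) → WithBot ℕ,
      -- surjectivity onto Γ ∪ {-∞}
      Set.range ρ = insert ⊥ ((fun m : ℕ => (m : WithBot ℕ)) '' Γ) ∧
      -- (O.1)
      (∀ f, ρ f = ⊥ ↔ f = 0) ∧
      -- (O.2)
      (∀ (a : K), a ≠ 0 → ∀ f, ρ (a • f) = ρ f) ∧
      -- (O.3)
      (∀ f g, ρ (f + g) ≤ max (ρ f) (ρ g)) ∧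
      -- (O.4)
      (∀ f g h, ρ f < ρ g → h ≠ 0 → ρ (f * h) < ρ (g * h)) ∧
      -- (O.5)
      (∀ f g, f ≠ 0 → g ≠ 0 → ρ f = ρ g → ∃ a : K, a ≠ 0 ∧ ρ (f - a • g) < ρ g) ∧
      -- (O.6)
      (∀ f g, ρ (f * g) = ρ f + ρ g) := by
  classical
  haveI := hr_sto
  -- basic facts about the strict total order
  have htrans : ∀ {a b c}, r a b → r b c → r a c := fun h1 h2 => _root_.trans_of r h1 h2
  have hirr : ∀ a, ¬ r a a := fun a => irrefl_of r a
  have hasym : ∀ {a b}, r a b → ¬ r b a := fun {a b} h1 h2 => hirr a (htrans h1 h2)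
  have htri : ∀ a b : Fin n →₀ ℕ, a ≠ b → r a b ∨ r b a := fun a b hab =>
    (trichotomous_of r a b).elim Or.inl (fun h => h.elim (fun h => absurd h hab) Or.inr)
  have hwadd : ∀ a b : Fin n →₀ ℕ, wdeg (a + b) = wdeg a + wdeg b := by
    intro a b
    simp [hwdeg, Finsupp.add_apply, add_mul, Finset.sum_add_distrib]
  have hwle : ∀ {a b : Fin n →₀ ℕ}, r a b → wdeg a ≤ wdeg b := by
    intro a b hab
    by_contra hlt
    exact hasym hab (hr_w _ _ (lt_of_not_ge hlt))
  -- maximum of a nonempty finset w.r.t. r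
  have hmax : ∀ s : Finset (Fin n →₀ ℕ), s.Nonempty → ∃ α ∈ s, ∀ β ∈ s, β ≠ α → r β α := by
    intro s
    induction s using Finset.induction_on with
    | empty => intro h; exact absurd h (by simp)
    | @insert a s ha ih =>
      intro _
      by_cases hs : s.Nonempty
      · obtain ⟨α, hαs, hα⟩ := ih hs
        by_cases haα : a = α
        · subst haα
          refine ⟨a, Finset.mem_insert_self _ _, ?_⟩
          intro β hβ hne
          rcases Finset.mem_insert.mp hβ with rfl | hβs
          · exact absurd rfl hne
          · exact hα β hβs hne
        · rcases htri a α haα with h | h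
          · refine ⟨α, Finset.mem_insert_of_mem hαs, ?_⟩
            intro β hβ hne
            rcases Finset.mem_insert.mp hβ with rfl | hβs
            · exact h
            · exact hα β hβs hne
          · refine ⟨a, Finset.mem_insert_self _ _, ?_⟩
            intro β hβ hne
            rcases Finset.mem_insert.mp hβ with rfl | hβs
            · exact absurd rfl hne
            · by_cases hβα : β = α
              · exact hβα ▸ h
              · exact htrans (hα β hβs hβα) h
      · have hse : s = ∅ := Finset.not_nonempty_iff_eq_empty.mp hs
        subst hse
        refine ⟨a, Finset.mem_insert_self _ _, ?_⟩
        intro β hβ hne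
        rcases Finset.mem_insert.mp hβ with rfl | h
        · exact absurd rfl hne
        · exact absurd h (by simp)
  have hlm_ex : ∀ f : MvPolynomial (Fin n) K, f ≠ 0 → ∃ α, IsLM f α := by
    intro f hf
    obtain ⟨α, hαs, hα⟩ := hmax f.support
      (Finset.nonempty_iff_ne_empty.mpr (fun h => hf (MvPolynomial.support_eq_empty.mp h)))
    exact ⟨α, (hIsLM f α).mpr ⟨hαs, hα⟩⟩
  have hlm_mem : ∀ {f α}, IsLM f α → α ∈ f.support := fun h => ((hIsLM _ _).mp h).1
  have hlm_ne : ∀ {f α}, IsLM f α → f ≠ 0 := by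
    intro f α h hf
    have := hlm_mem h
    rw [hf] at this
    simp at this
  have hlm_top : ∀ {f α}, IsLM f α → ∀ β ∈ f.support, wdeg β ≤ wdeg α := by
    intro f α hα β hβ
    by_cases hβα : β = α
    · exact le_of_eq (by rw [hβα])
    · exact hwle (((hIsLM f α).mp hα).2 β hβ hβα)
  -- division by the initial ideal
  have hdiv : ∀ α, α ∉ Δ → ∃ g ∈ G, ∃ s, IsLM g s ∧ ∃ γ, α = γ + s := by
    intro α hα
    have h1 : ∃ f ∈ I, f ≠ 0 ∧ IsLM f α := by
      rw [hΔ] at hα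
      simp only [Set.mem_setOf_eq, not_forall] at hα
      obtain ⟨f, hfI, hf0, hflm⟩ := hα
      exact ⟨f, hfI, hf0, not_not.mp hflm⟩
    obtain ⟨f, hfI, hf0, hflm⟩ := h1
    have hmem : (MvPolynomial.monomial α (1:K)) ∈ Ideal.span {m : MvPolynomial (Fin n) K |
        ∃ f ∈ I, f ≠ 0 ∧ ∃ β, IsLM f β ∧ m = MvPolynomial.monomial β (1 : K)} :=
      Ideal.subset_span ⟨f, hfI, hf0, α, hflm, rfl⟩
    rw [← hGB] at hmem
    have himage : {m : MvPolynomial (Fin n) K |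
          ∃ g ∈ G, g ≠ 0 ∧ ∃ β, IsLM g β ∧ m = MvPolynomial.monomial β (1 : K)}
        = (fun s => MvPolynomial.monomial s (1:K)) '' {s | ∃ g ∈ G, g ≠ 0 ∧ IsLM g s} := by
      ext m
      constructor
      · rintro ⟨g, hg, hg0, β, hβ, rfl⟩
        exact ⟨β, ⟨g, hg, hg0, hβ⟩, rfl⟩
      · rintro ⟨β, ⟨g, hg, hg0, hβ⟩, rfl⟩
        exact ⟨g, hg, hg0, β, hβ, rfl⟩
    rw [himage, MvPolynomial.mem_ideal_span_monomial_image] at hmem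
    have hαsupp : α ∈ (MvPolynomial.monomial α (1:K)).support := by
      rw [MvPolynomial.support_monomial]
      simp
    obtain ⟨s, ⟨g, hg, hg0, hglm⟩, hs⟩ := hmem α hαsupp
    exact ⟨g, hg, s, hglm, α - s, by rw [tsub_add_cancel_of_le hs]⟩
  -- one reduction step at a non-staircase leading monomial
  have hstep : ∀ (f : MvPolynomial (Fin n) K) (α), IsLM f α → α ∉ Δ →
      ∃ q : MvPolynomial (Fin n) K, q ∈ I ∧ q.coeff α = f.coeff α ∧
        (∀ β ∈ q.support, β ≠ α → r β α) ∧
        ∃ τ, τ ≠ α ∧ wdeg τ = wdeg α ∧ q.coeff τ ≠ 0 ∧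
          (∀ β ∈ q.support, wdeg β = wdeg α → β = α ∨ β = τ) := by
    intro f α hflm hαΔ
    obtain ⟨g, hgG, s, hglm, γ, hαeq⟩ := hdiv α hαΔ
    have hs_supp : s ∈ g.support := hlm_mem hglm
    have hsup : g.support.sup wdeg = wdeg s :=
      le_antisymm (Finset.sup_le (fun β hβ => hlm_top hglm β hβ)) (Finset.le_sup hs_supp)
    have hfilter := hC1 g hgG
    have hs_mem : s ∈ g.support.filter (fun β => wdeg β = g.support.sup wdeg) :=
      Finset.mem_filter.mpr ⟨hs_supp, hsup.symm ▸ rfl⟩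
    obtain ⟨μ, hμ_mem, hμs⟩ := Finset.exists_mem_ne (by rw [hfilter]; norm_num) s
    obtain ⟨hμ_supp, hμw'⟩ := Finset.mem_filter.mp hμ_mem
    have hμw : wdeg μ = wdeg s := by rw [hμw', hsup]
    have hfilter_eq : g.support.filter (fun β => wdeg β = g.support.sup wdeg) = {s, μ} := by
      refine (Finset.eq_of_subset_of_card_le ?_ ?_).symm
      · intro x hx
        rcases Finset.mem_insert.mp hx with rfl | hx
        · exact hs_mem
        · rw [Finset.mem_singleton.mp hx]; exact hμ_mem
      · rw [hfilter, Finset.card_insert_of_notMem (by simp [hμs.symm]), Finset.card_singleton]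
    have hfα : f.coeff α ≠ 0 := MvPolynomial.mem_support_iff.mp (hlm_mem hflm)
    have hgs : g.coeff s ≠ 0 := MvPolynomial.mem_support_iff.mp hs_supp
    set c := f.coeff α / g.coeff s with hc
    have hc0 : c ≠ 0 := div_ne_zero hfα hgs
    set q := c • (MvPolynomial.monomial γ (1:K) * g) with hq
    have hq_coeff : ∀ δ, q.coeff (γ + δ) = c * g.coeff δ := by
      intro δ
      rw [hq, MvPolynomial.coeff_smul, MvPolynomial.coeff_monomial_mul, one_mul, smul_eq_mul]
    have hq_supp : ∀ β ∈ q.support, ∃ δ ∈ g.support, β = γ + δ := by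
      intro β hβ
      have hcoeff := MvPolynomial.mem_support_iff.mp hβ
      rw [hq, MvPolynomial.coeff_smul, smul_eq_mul] at hcoeff
      have h2 : MvPolynomial.coeff β (MvPolynomial.monomial γ (1:K) * g) ≠ 0 :=
        fun h => hcoeff (by rw [h, mul_zero])
      rw [MvPolynomial.coeff_monomial_mul'] at h2
      by_cases hle : γ ≤ β
      · rw [if_pos hle, one_mul] at h2
        exact ⟨β - γ, MvPolynomial.mem_support_iff.mpr h2, (add_tsub_cancel_of_le hle).symm⟩
      · rw [if_neg hle] at h2
        exact absurd rfl h2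
    have hgI : g ∈ I := by rw [hG]; exact Ideal.subset_span hgG
    refine ⟨q, ?_, ?_, ?_, γ + μ, ?_, ?_, ?_, ?_⟩
    · rw [hq, MvPolynomial.smul_eq_C_mul]
      exact I.mul_mem_left _ (I.mul_mem_left _ hgI)
    · rw [hαeq, hq_coeff, hc, div_mul_cancel₀ _ hgs, hαeq]
    · intro β hβ hβα
      obtain ⟨δ, hδ, rfl⟩ := hq_supp β hβ
      have hδs : δ ≠ s := fun h => hβα (by rw [h, hαeq])
      have := hr_add δ s γ (((hIsLM g s).mp hglm).2 δ hδ hδs)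
      rw [hαeq, add_comm γ δ, add_comm γ s]
      exact this
    · rw [hαeq]
      exact fun h => hμs (add_left_cancel (h.symm ▸ rfl : γ + s = γ + μ)).symm
    · rw [hαeq, hwadd, hwadd, hμw]
    · rw [hq_coeff]
      exact mul_ne_zero hc0 (MvPolynomial.mem_support_iff.mp hμ_supp)
    · intro β hβ hwβ
      obtain ⟨δ, hδ, rfl⟩ := hq_supp β hβ
      rw [hαeq, hwadd, hwadd] at hwβ
      have hδw : wdeg δ = wdeg s := Nat.add_left_cancel hwβ
      have hδ_mem : δ ∈ g.support.filter (fun β => wdeg β = g.support.sup wdeg) :=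
        Finset.mem_filter.mpr ⟨hδ, by rw [hδw, hsup]⟩
      rw [hfilter_eq] at hδ_mem
      rcases Finset.mem_insert.mp hδ_mem with rfl | hδμ
      · exact Or.inl (by rw [hαeq])
      · exact Or.inr (by rw [Finset.mem_singleton.mp hδμ])
  -- Claim A: every nonzero element of I has at least two monomials of top weight
  have hA : ∀ α (h : MvPolynomial (Fin n) K), h ∈ I → IsLM h α →
      ∃ β ∈ h.support, β ≠ α ∧ wdeg β = wdeg α := by
    intro α
    refine hr_wf.induction
      (C := fun α => ∀ (h : MvPolynomial (Fin n) K), h ∈ I → IsLM h α →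
        ∃ β ∈ h.support, β ≠ α ∧ wdeg β = wdeg α) α ?_
    intro α IH h hI hlm
    by_contra hcon
    push_neg at hcon
    have hstrict : ∀ β ∈ h.support, β ≠ α → wdeg β < wdeg α :=
      fun β hβ hne => lt_of_le_of_ne (hlm_top hlm β hβ) (hcon β hβ hne)
    have hαΔ : α ∉ Δ := by
      rw [hΔ]
      intro hmem
      exact hmem h hI (hlm_ne hlm) hlm
    obtain ⟨q, hqI, hqα, hqr, τ, hτα, hτw, hτc, hqtop⟩ := hstep h α hlm hαΔ
    set h' := h - q with hh'
    have hh'I : h' ∈ I := I.sub_mem hI hqI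
    have hcoeffα : h'.coeff α = 0 := by
      rw [hh', MvPolynomial.coeff_sub, hqα, sub_self]
    have hτsupp : τ ∈ h'.support := by
      rw [MvPolynomial.mem_support_iff, hh', MvPolynomial.coeff_sub]
      have hhτ : h.coeff τ = 0 := by
        by_contra hne
        exact (hcon τ (MvPolynomial.mem_support_iff.mpr hne) hτα) hτw
      rw [hhτ, zero_sub]
      exact neg_ne_zero.mpr hτc
    have hh'0 : h' ≠ 0 := fun h0 => by rw [h0] at hτsupp; simp at hτsupp
    obtain ⟨α', hα'⟩ := hlm_ex h' hh'0
    have hsupp' : ∀ β ∈ h'.support, β ∈ h.support ∨ β ∈ q.support := by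
      intro β hβ
      by_contra hcn
      push_neg at hcn
      have h1 := MvPolynomial.notMem_support_iff.mp hcn.1
      have h2 := MvPolynomial.notMem_support_iff.mp hcn.2
      exact (MvPolynomial.mem_support_iff.mp hβ)
        (by rw [hh', MvPolynomial.coeff_sub, h1, h2, sub_self])
    have hneα : ∀ β ∈ h'.support, β ≠ α := by
      intro β hβ he
      rw [he] at hβ
      exact (MvPolynomial.mem_support_iff.mp hβ) hcoeffα
    have hrα : ∀ β ∈ h'.support, r β α := by
      intro β hβ
      rcases hsupp' β hβ with hmem | hmem
      · exact ((hIsLM h α).mp hlm).2 β hmem (hneα β hβ)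
      · exact hqr β hmem (hneα β hβ)
    have hα'α : r α' α := hrα α' (hlm_mem hα')
    have hwα' : wdeg α' = wdeg α :=
      le_antisymm (hwle hα'α) (hτw ▸ hlm_top hα' τ hτsupp)
    have huniq : ∀ β ∈ h'.support, wdeg β = wdeg α → β = τ := by
      intro β hβ hwβ
      rcases hsupp' β hβ with hmem | hmem
      · exact absurd hwβ (hcon β hmem (hneα β hβ))
      · rcases hqtop β hmem hwβ with h1 | h1
        · exact absurd h1 (hneα β hβ)
        · exact h1
    have hα'τ : α' = τ := huniq α' (hlm_mem hα') hwα'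
    obtain ⟨β', hβ'supp, hβ'ne, hβ'w⟩ := IH α' hα'α h' hh'I hα'
    exact hβ'ne ((huniq β' hβ'supp (by rw [hβ'w, hwα'])).trans hα'τ.symm)
  -- existence of reduced representatives
  have hredlm : ∀ α (f : MvPolynomial (Fin n) K), IsLM f α →
      ∃ p : MvPolynomial (Fin n) K, (∀ β ∈ p.support, β ∈ Δ) ∧ f - p ∈ I := by
    intro α
    refine hr_wf.induction
      (C := fun α => ∀ (f : MvPolynomial (Fin n) K), IsLM f α →
        ∃ p : MvPolynomial (Fin n) K, (∀ β ∈ p.support, β ∈ Δ) ∧ f - p ∈ I) α ?_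
    intro α IH f hlm
    by_cases hαΔ : α ∈ Δ
    · set f' := f - MvPolynomial.monomial α (f.coeff α) with hf'
      have hcoeffα : f'.coeff α = 0 := by
        rw [hf', MvPolynomial.coeff_sub, MvPolynomial.coeff_monomial, if_pos rfl, sub_self]
      have hsupp' : ∀ β ∈ f'.support, β ∈ f.support ∧ β ≠ α := by
        intro β hβ
        have hβα : β ≠ α := by
          intro he
          rw [he] at hβ
          exact (MvPolynomial.mem_support_iff.mp hβ) hcoeffα
        have hc := MvPolynomial.mem_support_iff.mp hβ
        rw [hf', MvPolynomial.coeff_sub, MvPolynomial.coeff_monomial,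
          if_neg (fun h => hβα h.symm), sub_zero] at hc
        exact ⟨MvPolynomial.mem_support_iff.mpr hc, hβα⟩
      have hmono_supp : ∀ β ∈ (MvPolynomial.monomial α (f.coeff α)).support, β ∈ Δ := by
        intro β hβ
        have := MvPolynomial.support_monomial_subset hβ
        rw [Finset.mem_singleton.mp this]
        exact hαΔ
      by_cases hf'0 : f' = 0
      · refine ⟨MvPolynomial.monomial α (f.coeff α), hmono_supp, ?_⟩
        rw [show f - MvPolynomial.monomial α (f.coeff α) = f' from rfl, hf'0]
        exact I.zero_mem
      · obtain ⟨α', hα'⟩ := hlm_ex f' hf'0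
        have hr' : r α' α := by
          obtain ⟨hm, hne⟩ := hsupp' α' (hlm_mem hα')
          exact ((hIsLM f α).mp hlm).2 α' hm hne
        obtain ⟨p', hp'Δ, hp'I⟩ := IH α' hr' f' hα'
        refine ⟨MvPolynomial.monomial α (f.coeff α) + p', ?_, ?_⟩
        · intro β hβ
          rcases Finset.mem_union.mp (MvPolynomial.support_add hβ) with h | h
          · exact hmono_supp β h
          · exact hp'Δ β h
        · have he : f - (MvPolynomial.monomial α (f.coeff α) + p') = f' - p' := by
            rw [hf']; ring
          rw [he]
          exact hp'I
    · obtain ⟨q, hqI, hqα, hqr, -⟩ := hstep f α hlm hαΔ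
      set f' := f - q with hf'
      have hcoeffα : f'.coeff α = 0 := by
        rw [hf', MvPolynomial.coeff_sub, hqα, sub_self]
      by_cases hf'0 : f' = 0
      · refine ⟨0, by simp, ?_⟩
        rw [sub_zero]
        rw [sub_eq_zero] at hf'0
        rw [hf'0]
        exact hqI
      · obtain ⟨α', hα'⟩ := hlm_ex f' hf'0
        have hr' : r α' α := by
          have hm := hlm_mem hα'
          have hne : α' ≠ α := by
            intro he
            rw [he] at hm
            exact (MvPolynomial.mem_support_iff.mp hm) hcoeffα
          have : α' ∈ f.support ∨ α' ∈ q.support := by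
            by_contra hcn
            push_neg at hcn
            exact (MvPolynomial.mem_support_iff.mp hm)
              (by rw [hf', MvPolynomial.coeff_sub, MvPolynomial.notMem_support_iff.mp hcn.1,
                MvPolynomial.notMem_support_iff.mp hcn.2, sub_self])
          rcases this with hmem | hmem
          · exact ((hIsLM f α).mp hlm).2 α' hmem hne
          · exact hqr α' hmem hne
        obtain ⟨p', hp'Δ, hp'I⟩ := IH α' hr' f' hα'
        refine ⟨p', hp'Δ, ?_⟩
        have he : f - p' = (f' - p') + q := by rw [hf']; ring
        rw [he]
        exact I.add_mem hp'I hqI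
  have hred : ∀ f : MvPolynomial (Fin n) K,
      ∃ p : MvPolynomial (Fin n) K, (∀ β ∈ p.support, β ∈ Δ) ∧ f - p ∈ I := by
    intro f
    by_cases hf0 : f = 0
    · exact ⟨0, by simp, by rw [hf0, sub_zero]; exact I.zero_mem⟩
    · obtain ⟨α, hα⟩ := hlm_ex f hf0
      exact hredlm α f hα
  -- uniqueness of reduced representatives
  have hNFuniq : ∀ p₁ p₂ : MvPolynomial (Fin n) K, (∀ β ∈ p₁.support, β ∈ Δ) →
      (∀ β ∈ p₂.support, β ∈ Δ) → p₁ - p₂ ∈ I → p₁ = p₂ := by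
    intro p₁ p₂ h1 h2 hI'
    by_contra hne
    have hd0 : p₁ - p₂ ≠ 0 := sub_ne_zero.mpr hne
    obtain ⟨δ, hδ⟩ := hlm_ex _ hd0
    have hδΔ : δ ∈ Δ := by
      rcases Finset.mem_union.mp (MvPolynomial.support_sub _ _ _ (hlm_mem hδ)) with h | h
      exacts [h1 δ h, h2 δ h]
    rw [hΔ] at hδΔ
    exact hδΔ _ hI' hd0 hδ
  -- the normal form function
  obtain ⟨NF, hNFΔ, hNFI⟩ : ∃ NF : MvPolynomial (Fin n) K → MvPolynomial (Fin n) K,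
      (∀ f, ∀ β ∈ (NF f).support, β ∈ Δ) ∧ (∀ f, f - NF f ∈ I) :=
    ⟨fun f => (hred f).choose, fun f => (hred f).choose_spec.1, fun f => (hred f).choose_spec.2⟩
  have hNFcoset : ∀ f₁ f₂, f₁ - f₂ ∈ I → NF f₁ = NF f₂ := by
    intro f₁ f₂ h
    refine hNFuniq _ _ (hNFΔ f₁) (hNFΔ f₂) ?_
    have he : NF f₁ - NF f₂ = ((f₂ - NF f₂) - (f₁ - NF f₁)) + (f₁ - f₂) := by ring
    rw [he]
    exact I.add_mem (I.sub_mem (hNFI f₂) (hNFI f₁)) h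
  have hNFfix : ∀ p, (∀ β ∈ p.support, β ∈ Δ) → NF p = p := by
    intro p hp
    refine hNFuniq _ _ (hNFΔ p) hp ?_
    rw [← neg_sub]
    exact I.neg_mem (hNFI p)
  have hNF0iff : ∀ f, NF f = 0 ↔ f ∈ I := by
    intro f
    constructor
    · intro h
      have := hNFI f
      rwa [h, sub_zero] at this
    · intro h
      have h2 : NF f = NF 0 := hNFcoset f 0 (by rwa [sub_zero])
      rw [h2, hNFfix 0 (by simp)]
  -- the weighted degree with values in WithBot ℕ
  obtain ⟨D, hDdef⟩ : ∃ D : MvPolynomial (Fin n) K → WithBot ℕ,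
      ∀ p, D p = p.support.sup (fun β => ((wdeg β : ℕ) : WithBot ℕ)) := ⟨_, fun _ => rfl⟩
  have hD0 : ∀ p, D p = ⊥ ↔ p = 0 := by
    intro p
    constructor
    · intro h
      by_contra hp
      obtain ⟨α, hα⟩ := hlm_ex p hp
      have hle := Finset.le_sup (f := fun β => ((wdeg β : ℕ) : WithBot ℕ)) (hlm_mem hα)
      rw [hDdef] at h
      rw [h] at hle
      exact absurd (le_bot_iff.mp hle) (by simp)
    · intro h
      rw [hDdef, h]
      simp
  have hDlm : ∀ p α, IsLM p α → D p = ((wdeg α : ℕ) : WithBot ℕ) := by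
    intro p α hα
    rw [hDdef]
    refine le_antisymm ?_ (Finset.le_sup (f := fun β => ((wdeg β : ℕ) : WithBot ℕ)) (hlm_mem hα))
    exact Finset.sup_le (fun β hβ => by exact_mod_cast hlm_top hα β hβ)
  -- the master lemma: unique-top-monomial polynomials keep their weight under NF
  have hM : ∀ (f : MvPolynomial (Fin n) K) α, IsLM f α →
      (∀ β ∈ f.support, β ≠ α → wdeg β < wdeg α) → f ∉ I →
      ∃ α', IsLM (NF f) α' ∧ wdeg α' = wdeg α := by
    intro f α hlm hstrictf hfI
    have hNF0 : NF f ≠ 0 := fun h => hfI ((hNF0iff f).mp h)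
    obtain ⟨α', hα'⟩ := hlm_ex _ hNF0
    refine ⟨α', hα', ?_⟩
    by_contra hne
    have hstrictNF : ∀ β ∈ (NF f).support, β ≠ α' → wdeg β < wdeg α' := by
      intro β hβ hβne
      refine lt_of_le_of_ne (hlm_top hα' β hβ) (fun heq => hβne ?_)
      exact hC2 (hNFΔ f β hβ) (hNFΔ f α' (hlm_mem hα')) heq
    have key : ∀ (p₁ p₂ : MvPolynomial (Fin n) K) α₁ α₂, IsLM p₁ α₁ → IsLM p₂ α₂ →
        (∀ β ∈ p₁.support, β ≠ α₁ → wdeg β < wdeg α₁) → wdeg α₂ < wdeg α₁ →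
        (p₁ - p₂ ∈ I) → False := by
      intro p₁ p₂ α₁ α₂ h₁ h₂ hs₁ hlt hI'
      have hc : (p₁ - p₂).coeff α₁ ≠ 0 := by
        rw [MvPolynomial.coeff_sub]
        have h0 : p₂.coeff α₁ = 0 := by
          by_contra hc2
          exact absurd (hlm_top h₂ α₁ (MvPolynomial.mem_support_iff.mpr hc2)) (not_le.mpr hlt)
        rw [h0, sub_zero]
        exact MvPolynomial.mem_support_iff.mp (hlm_mem h₁)
      have hmem : α₁ ∈ (p₁ - p₂).support := MvPolynomial.mem_support_iff.mpr hc
      have hstrict : ∀ β ∈ (p₁ - p₂).support, β ≠ α₁ → wdeg β < wdeg α₁ := by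
        intro β hβ hβne
        rcases Finset.mem_union.mp (MvPolynomial.support_sub _ _ _ hβ) with h | h
        · exact hs₁ β h hβne
        · exact lt_of_le_of_lt (hlm_top h₂ β h) hlt
      have hlm' : IsLM (p₁ - p₂) α₁ :=
        (hIsLM _ _).mpr ⟨hmem, fun β hβ hβne => hr_w _ _ (hstrict β hβ hβne)⟩
      obtain ⟨β, hβ, hβne, hβw⟩ := hA α₁ _ hI' hlm'
      exact absurd hβw (ne_of_lt (hstrict β hβ hβne))
    rcases lt_or_gt_of_ne hne with hlt | hgt
    · exact key f (NF f) α α' hlm hα' hstrictf hlt (hNFI f)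
    · exact key (NF f) f α' α hα' hlm hstrictNF hgt
        (by rw [← neg_sub]; exact I.neg_mem (hNFI f))
  -- reduced polynomials have a unique top-weight monomial
  have hUT : ∀ (p : MvPolynomial (Fin n) K) α, (∀ β ∈ p.support, β ∈ Δ) → IsLM p α →
      ∀ β ∈ p.support, β ≠ α → wdeg β < wdeg α := by
    intro p α hp hα β hβ hne
    exact lt_of_le_of_ne (hlm_top hα β hβ)
      (fun he => hne (hC2 (hp β hβ) (hp α (hlm_mem hα)) he))
  -- the product of two unique-top polynomials has a unique top
  have hprod : ∀ (f g : MvPolynomial (Fin n) K) α β, IsLM f α → IsLM g β →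
      (∀ τ ∈ f.support, τ ≠ α → wdeg τ < wdeg α) →
      (∀ τ ∈ g.support, τ ≠ β → wdeg τ < wdeg β) →
      IsLM (f*g) (α+β) ∧ (∀ τ ∈ (f*g).support, τ ≠ α+β → wdeg τ < wdeg (α+β)) := by
    intro f g α β hfα hgβ hsf hsg
    have hsupp : ∀ τ ∈ (f*g).support, ∃ τ₁ ∈ f.support, ∃ τ₂ ∈ g.support, τ = τ₁ + τ₂ := by
      intro τ hτ
      have hmem := MvPolynomial.support_mul f g hτ
      rw [Finset.mem_add] at hmem
      obtain ⟨τ₁, h1, τ₂, h2, he⟩ := hmem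
      exact ⟨τ₁, h1, τ₂, h2, he.symm⟩
    have hwlt : ∀ τ ∈ (f*g).support, τ ≠ α + β → wdeg τ < wdeg (α+β) := by
      intro τ hτ hne
      obtain ⟨τ₁, h1, τ₂, h2, rfl⟩ := hsupp τ hτ
      rw [hwadd, hwadd]
      by_cases e1 : τ₁ = α
      · subst e1
        have e2 : τ₂ ≠ β := fun h => hne (by rw [h])
        exact Nat.add_lt_add_left (hsg τ₂ h2 e2) _
      · exact Nat.add_lt_add_of_lt_of_le (hsf τ₁ h1 e1) (hlm_top hgβ τ₂ h2)
    have hcoeff : (f*g).coeff (α+β) = f.coeff α * g.coeff β := by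
      rw [MvPolynomial.coeff_mul]
      refine Finset.sum_eq_single_of_mem (α, β) (Finset.HasAntidiagonal.mem_antidiagonal.mpr rfl) ?_
      · rintro ⟨x₁, x₂⟩ hx hne
        rw [Finset.HasAntidiagonal.mem_antidiagonal] at hx
        by_contra hc
        have hx1 : x₁ ∈ f.support :=
          MvPolynomial.mem_support_iff.mpr (fun h => hc (by rw [h, zero_mul]))
        have hx2 : x₂ ∈ g.support :=
          MvPolynomial.mem_support_iff.mpr (fun h => hc (by rw [h, mul_zero]))
        have hweq : wdeg x₁ + wdeg x₂ = wdeg α + wdeg β := by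
          rw [← hwadd, ← hwadd, hx]
        have hle1 := hlm_top hfα x₁ hx1
        have hle2 := hlm_top hgβ x₂ hx2
        have he1 : wdeg x₁ = wdeg α := by omega
        have he2 : wdeg x₂ = wdeg β := by omega
        have hx1α : x₁ = α := by
          by_contra hxa
          exact absurd he1 (ne_of_lt (hsf x₁ hx1 hxa))
        have hx2β : x₂ = β := by
          by_contra hxb
          exact absurd he2 (ne_of_lt (hsg x₂ hx2 hxb))
        exact hne (Prod.ext hx1α hx2β)
    have hc0 : (f*g).coeff (α+β) ≠ 0 := by
      rw [hcoeff]
      exact mul_ne_zero (MvPolynomial.mem_support_iff.mp (hlm_mem hfα))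
        (MvPolynomial.mem_support_iff.mp (hlm_mem hgβ))
    have hmem : α+β ∈ (f*g).support := MvPolynomial.mem_support_iff.mpr hc0
    exact ⟨(hIsLM _ _).mpr ⟨hmem, fun τ hτ hne => hr_w _ _ (hwlt τ hτ hne)⟩, hwlt⟩
  -- auxiliary facts about the quotient
  have hmks : ∀ (a : K) (F : MvPolynomial (Fin n) K),
      Ideal.Quotient.mk I (a • F) = a • Ideal.Quotient.mk I F := by
    intro a F
    exact map_smul (Ideal.Quotient.mkₐ K I) a F
  have hsmulI : ∀ (a : K) (p : MvPolynomial (Fin n) K), p ∈ I → a • p ∈ I := by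
    intro a p hp
    rw [MvPolynomial.smul_eq_C_mul]
    exact I.mul_mem_left _ hp
  -- define ρ
  obtain ⟨ρ, hρdef⟩ : ∃ ρ : (MvPolynomial (Fin n) K ⧸ I) → WithBot ℕ,
      ∀ x, ρ x = D (NF (Function.surjInv Ideal.Quotient.mk_surjective x)) := ⟨_, fun _ => rfl⟩
  have hρmk : ∀ F, ρ (Ideal.Quotient.mk I F) = D (NF F) := by
    intro F
    have h1 : Ideal.Quotient.mk I
        (Function.surjInv Ideal.Quotient.mk_surjective (Ideal.Quotient.mk I F))
        = Ideal.Quotient.mk I F := Function.surjInv_eq _ _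
    have h2 := Ideal.Quotient.eq.mp h1
    rw [hρdef]
    exact congrArg D (hNFcoset _ _ h2)
  -- O.1
  have hO1 : ∀ x : MvPolynomial (Fin n) K ⧸ I, ρ x = ⊥ ↔ x = 0 := by
    intro x
    obtain ⟨F, rfl⟩ := Ideal.Quotient.mk_surjective x
    rw [hρmk, hD0, hNF0iff, Ideal.Quotient.eq_zero_iff_mem]
  -- O.6
  have hO6 : ∀ x y : MvPolynomial (Fin n) K ⧸ I, ρ (x * y) = ρ x + ρ y := by
    intro x y
    obtain ⟨F, rfl⟩ := Ideal.Quotient.mk_surjective x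
    obtain ⟨Gq, rfl⟩ := Ideal.Quotient.mk_surjective y
    rw [← map_mul, hρmk, hρmk, hρmk]
    by_cases hF : F ∈ I
    · have hFG : F * Gq ∈ I := I.mul_mem_right _ hF
      rw [(hNF0iff _).mpr hF, (hNF0iff _).mpr hFG]
      have hb : D 0 = ⊥ := (hD0 0).mpr rfl
      rw [hb, WithBot.bot_add]
    by_cases hGq : Gq ∈ I
    · have hFG : F * Gq ∈ I := I.mul_mem_left _ hGq
      rw [(hNF0iff _).mpr hGq, (hNF0iff _).mpr hFG]
      have hb : D 0 = ⊥ := (hD0 0).mpr rfl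
      rw [hb, WithBot.add_bot]
    have hf0 : NF F ≠ 0 := fun h => hF ((hNF0iff F).mp h)
    have hg0 : NF Gq ≠ 0 := fun h => hGq ((hNF0iff Gq).mp h)
    obtain ⟨α, hα⟩ := hlm_ex _ hf0
    obtain ⟨β, hβ⟩ := hlm_ex _ hg0
    have hsf := hUT (NF F) α (hNFΔ F) hα
    have hsg := hUT (NF Gq) β (hNFΔ Gq) hβ
    obtain ⟨hlmprod, hstrictprod⟩ := hprod (NF F) (NF Gq) α β hα hβ hsf hsg
    have hprodI : NF F * NF Gq ∉ I := by
      intro hmem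
      obtain ⟨τ, hτ, hτne, hτw⟩ := hA (α+β) _ hmem hlmprod
      exact absurd hτw (ne_of_lt (hstrictprod τ hτ hτne))
    obtain ⟨γ', hγ'lm, hγ'w⟩ := hM (NF F * NF Gq) (α+β) hlmprod hstrictprod hprodI
    have hcos : NF (F * Gq) = NF (NF F * NF Gq) := by
      refine hNFcoset _ _ ?_
      have he : F * Gq - NF F * NF Gq = F * (Gq - NF Gq) + (F - NF F) * NF Gq := by ring
      rw [he]
      exact I.add_mem (I.mul_mem_left _ (hNFI Gq)) (I.mul_mem_right _ (hNFI F))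
    rw [hcos, hDlm _ _ hγ'lm, hDlm _ _ hα, hDlm _ _ hβ, hγ'w, hwadd]
    push_cast
    rfl
  refine ⟨ρ, ?_, hO1, ?_, ?_, ?_, ?_, hO6⟩
  -- surjectivity
  · apply Set.eq_of_subset_of_subset
    · rintro v ⟨x, rfl⟩
      obtain ⟨F, rfl⟩ := Ideal.Quotient.mk_surjective x
      rw [hρmk]
      by_cases h : NF F = 0
      · rw [h, (hD0 0).mpr rfl]
        exact Set.mem_insert _ _
      · obtain ⟨α, hα⟩ := hlm_ex _ h
        rw [hDlm _ _ hα]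
        exact Set.mem_insert_of_mem _
          ⟨wdeg α, by rw [hΓ]; exact ⟨α, hNFΔ F α (hlm_mem hα), rfl⟩, rfl⟩
    · rintro v hv
      rcases Set.mem_insert_iff.mp hv with rfl | ⟨m, hm, rfl⟩
      · refine ⟨0, ?_⟩
        rw [show (0 : MvPolynomial (Fin n) K ⧸ I) = Ideal.Quotient.mk I 0 from (map_zero _).symm,
          hρmk, hNFfix 0 (by simp), (hD0 0).mpr rfl]
      · rw [hΓ] at hm
        obtain ⟨α, hαΔ, rfl⟩ := hm
        refine ⟨Ideal.Quotient.mk I (MvPolynomial.monomial α (1:K)), ?_⟩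
        have hsupp1 : (MvPolynomial.monomial α (1:K)).support = {α} := by
          rw [MvPolynomial.support_monomial, if_neg one_ne_zero]
        have hredm : ∀ β ∈ (MvPolynomial.monomial α (1:K)).support, β ∈ Δ := by
          intro β hβ
          rw [hsupp1, Finset.mem_singleton] at hβ
          rw [hβ]
          exact hαΔ
        have hlm1 : IsLM (MvPolynomial.monomial α (1:K)) α := by
          refine (hIsLM _ _).mpr ⟨by rw [hsupp1]; exact Finset.mem_singleton_self _, ?_⟩
          intro β hβ hne
          rw [hsupp1, Finset.mem_singleton] at hβ
          exact absurd hβ hne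
        rw [hρmk, hNFfix _ hredm, hDlm _ _ hlm1]
  -- O.2
  · intro a ha x
    obtain ⟨F, rfl⟩ := Ideal.Quotient.mk_surjective x
    rw [← hmks, hρmk, hρmk]
    have hNFs : NF (a • F) = a • NF F := by
      refine hNFuniq _ _ (hNFΔ _) ?_ ?_
      · intro β hβ
        exact hNFΔ F β (Finsupp.support_smul hβ)
      · have he : a • F - a • NF F = a • (F - NF F) := by rw [smul_sub]
        have h1 : a • F - a • NF F ∈ I := he ▸ hsmulI a _ (hNFI F)
        have he2 : NF (a • F) - a • NF F = -((a • F) - NF (a • F)) + (a • F - a • NF F) := by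
          ring
        rw [he2]
        exact I.add_mem (I.neg_mem (hNFI _)) h1
    rw [hNFs, hDdef, hDdef]
    have hse : (a • NF F).support = (NF F).support := Finsupp.support_smul_eq ha
    rw [hse]
  -- O.3
  · intro x y
    obtain ⟨F, rfl⟩ := Ideal.Quotient.mk_surjective x
    obtain ⟨Gq, rfl⟩ := Ideal.Quotient.mk_surjective y
    rw [← map_add, hρmk, hρmk, hρmk]
    have hNFs : NF (F + Gq) = NF F + NF Gq := by
      refine hNFuniq _ _ (hNFΔ _) ?_ ?_
      · intro β hβ
        rcases Finset.mem_union.mp (MvPolynomial.support_add hβ) with h | h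
        exacts [hNFΔ F β h, hNFΔ Gq β h]
      · have he : NF (F + Gq) - (NF F + NF Gq)
            = -((F + Gq) - NF (F + Gq)) + ((F - NF F) + (Gq - NF Gq)) := by ring
        rw [he]
        exact I.add_mem (I.neg_mem (hNFI _)) (I.add_mem (hNFI F) (hNFI Gq))
    rw [hNFs]
    simp only [hDdef]
    refine Finset.sup_le ?_
    intro β hβ
    rcases Finset.mem_union.mp (MvPolynomial.support_add hβ) with h | h
    · exact le_trans (Finset.le_sup (f := fun β => ((wdeg β : ℕ) : WithBot ℕ)) h)
        (le_max_left _ _)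
    · exact le_trans (Finset.le_sup (f := fun β => ((wdeg β : ℕ) : WithBot ℕ)) h)
        (le_max_right _ _)
  -- O.4
  · intro x y z hxy hz
    rw [hO6, hO6]
    have hz' : ρ z ≠ ⊥ := fun h => hz ((hO1 z).mp h)
    exact WithBot.add_lt_add_right hz' hxy
  -- O.5
  · intro x y hx hy hxy
    obtain ⟨F, rfl⟩ := Ideal.Quotient.mk_surjective x
    obtain ⟨Gq, rfl⟩ := Ideal.Quotient.mk_surjective y
    have hF : F ∉ I := fun h => hx (Ideal.Quotient.eq_zero_iff_mem.mpr h)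
    have hGq : Gq ∉ I := fun h => hy (Ideal.Quotient.eq_zero_iff_mem.mpr h)
    have hf0 : NF F ≠ 0 := fun h => hF ((hNF0iff F).mp h)
    have hg0 : NF Gq ≠ 0 := fun h => hGq ((hNF0iff Gq).mp h)
    obtain ⟨α, hα⟩ := hlm_ex _ hf0
    obtain ⟨β, hβ⟩ := hlm_ex _ hg0
    rw [hρmk, hρmk, hDlm _ _ hα, hDlm _ _ hβ] at hxy
    have hweq : wdeg α = wdeg β := by exact_mod_cast hxy
    have hαβ : α = β := hC2 (hNFΔ F α (hlm_mem hα)) (hNFΔ Gq β (hlm_mem hβ)) hweq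
    subst hαβ
    have hcF : (NF F).coeff α ≠ 0 := MvPolynomial.mem_support_iff.mp (hlm_mem hα)
    have hcG : (NF Gq).coeff α ≠ 0 := MvPolynomial.mem_support_iff.mp (hlm_mem hβ)
    set a := (NF F).coeff α / (NF Gq).coeff α with haa
    have ha0 : a ≠ 0 := div_ne_zero hcF hcG
    refine ⟨a, ha0, ?_⟩
    have hrw : Ideal.Quotient.mk I F - a • Ideal.Quotient.mk I Gq
        = Ideal.Quotient.mk I (F - a • Gq) := by
      rw [map_sub, hmks]
    rw [hrw, hρmk, hρmk, hDlm _ _ hβ]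
    have hNFs : NF (F - a • Gq) = NF F - a • NF Gq := by
      refine hNFuniq _ _ (hNFΔ _) ?_ ?_
      · intro τ hτ
        rcases Finset.mem_union.mp (MvPolynomial.support_sub _ _ _ hτ) with h | h
        · exact hNFΔ F τ h
        · exact hNFΔ Gq τ (Finsupp.support_smul h)
      · have h1 : (F - a • Gq) - (NF F - a • NF Gq)
            = (F - NF F) - a • (Gq - NF Gq) := by
          rw [smul_sub]; ring
        have h2 : (F - a • Gq) - (NF F - a • NF Gq) ∈ I := by
          rw [h1]
          exact I.sub_mem (hNFI F) (hsmulI a _ (hNFI Gq))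
        have h3 : NF (F - a • Gq) - (NF F - a • NF Gq)
            = -((F - a • Gq) - NF (F - a • Gq)) + ((F - a • Gq) - (NF F - a • NF Gq)) := by
          ring
        rw [h3]
        exact I.add_mem (I.neg_mem (hNFI _)) h2
    rw [hNFs, hDdef]
    refine (Finset.sup_lt_iff (by exact WithBot.bot_lt_coe _)).mpr ?_
    intro τ hτ
    have hcoeffτ : (NF F).coeff τ - a * (NF Gq).coeff τ ≠ 0 := by
      have := MvPolynomial.mem_support_iff.mp hτ
      rwa [MvPolynomial.coeff_sub, MvPolynomial.coeff_smul, smul_eq_mul] at this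
    have hτα : τ ≠ α := by
      intro he
      rw [he, haa, div_mul_cancel₀ _ hcG, sub_self] at hcoeffτ
      exact hcoeffτ rfl
    have hτmem : τ ∈ (NF F).support ∨ τ ∈ (NF Gq).support := by
      by_contra hcn
      push_neg at hcn
      exact hcoeffτ (by
        rw [MvPolynomial.notMem_support_iff.mp hcn.1, MvPolynomial.notMem_support_iff.mp hcn.2,
          mul_zero, sub_zero])
    have hlt : wdeg τ < wdeg α := by
      rcases hτmem with h | h
      · exact hUT (NF F) α (hNFΔ F) hα τ h hτα
      · exact hUT (NF Gq) α (hNFΔ Gq) hβ τ h hτα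
    exact_mod_cast hlt
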